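/- Let $f(x) = \frac{1}{\sqrt{2\pi}} x^{-1} \exp\left(-\tfrac{1}{2}(\log x)^2\right)$, $x > 0$, be the standard lognormal density, and for $\varepsilon \in [-1,1]$ define $f_\varepsilon(x) = f(x)[1 + \varepsilon \sin(2\pi \log x)]$. Then each $f_\varepsilon$ is a nonnegative probability density on $(0,\infty)$, and $\int_0^\infty x^k f_\varepsilon(x)\,dx = \int_0^\infty x^k f(x)\,dx = e^{k^2/2}$ for every nonnegative integer $k$. -/

import Mathlib

open MeasureTheory Real

-- change of variables x = exp t
lemma cov_exp (g : ℝ → ℝ) :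
    (∫ x in Set.Ioi (0:ℝ), g x) = ∫ t : ℝ, Real.exp t * g (Real.exp t) := by
  rw [← Real.range_exp, ← Set.image_univ,
    integral_image_eq_integral_abs_deriv_smul MeasurableSet.univ
      (fun x _ => (Real.hasDerivAt_exp x).hasDerivWithinAt)
      (Real.exp_injective.injOn)]
  simp [abs_of_pos (Real.exp_pos _), smul_eq_mul, Measure.restrict_univ]

lemma integrable_gauss (a : ℝ) :
    Integrable (fun t : ℝ => Real.exp (a * t - t ^ 2 / 2)) := by
  have h : ∀ t : ℝ, a * t - t ^ 2 / 2 = a ^ 2 / 2 + (-(1/2) * (t - a) ^ 2) := by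
    intro t; ring
  simp_rw [h, Real.exp_add]
  exact ((integrable_exp_neg_mul_sq (by norm_num : (0:ℝ) < 1/2)).comp_sub_right a).const_mul _

lemma gauss_val (a : ℝ) :
    (∫ t : ℝ, Real.exp (a * t - t ^ 2 / 2)) = Real.sqrt (2 * π) * Real.exp (a ^ 2 / 2) := by
  have h : ∀ t : ℝ, a * t - t ^ 2 / 2 = a ^ 2 / 2 + (-(1/2) * (t - a) ^ 2) := by
    intro t; ring
  simp_rw [h, Real.exp_add]
  rw [integral_const_mul, integral_sub_right_eq_self (fun t => Real.exp (-(1/2) * t ^ 2)) a,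
    integral_gaussian]
  rw [show π / (1/2 : ℝ) = 2 * π by ring]
  ring

lemma sin_symm (k : ℕ) (t : ℝ) :
    Real.exp ((k:ℝ) * (2 * k - t) - (2 * k - t) ^ 2 / 2) * Real.sin (2 * π * (2 * k - t))
      = -(Real.exp ((k:ℝ) * t - t ^ 2 / 2) * Real.sin (2 * π * t)) := by
  have h1 : (k:ℝ) * (2 * k - t) - (2 * k - t) ^ 2 / 2 = (k:ℝ) * t - t ^ 2 / 2 := by ring
  have h2 : Real.sin (2 * π * (2 * k - t)) = -Real.sin (2 * π * t) := by
    have : 2 * π * ((2 * k : ℝ) - t) = (2 * k : ℕ) * (2 * π) - 2 * π * t := by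
      push_cast; ring
    rw [this, Real.sin_sub, Real.cos_nat_mul_two_pi,
      show ((2 * k : ℕ) : ℝ) * (2 * π) = ((4 * k : ℕ) : ℝ) * π by push_cast; ring,
      Real.sin_nat_mul_pi]
    ring
  rw [h1, h2]; ring

lemma integrable_gauss_sin (k : ℕ) :
    Integrable (fun t : ℝ => Real.exp ((k:ℝ) * t - t ^ 2 / 2) * Real.sin (2 * π * t)) := by
  have h := (integrable_gauss (k:ℝ)).bdd_mul (c := 1)
    (Continuous.aestronglyMeasurable (by continuity : Continuous fun t : ℝ => Real.sin (2 * π * t)))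
    (Filter.Eventually.of_forall fun t => by rw [Real.norm_eq_abs]; exact Real.abs_sin_le_one _)
  simpa [mul_comm] using h

lemma sin_int_zero (k : ℕ) :
    (∫ t : ℝ, Real.exp ((k:ℝ) * t - t ^ 2 / 2) * Real.sin (2 * π * t)) = 0 := by
  have h := integral_sub_left_eq_self
    (fun t : ℝ => Real.exp ((k:ℝ) * t - t ^ 2 / 2) * Real.sin (2 * π * t)) volume ((2 * k : ℝ))
  simp_rw [sin_symm k] at h
  rw [integral_neg] at h
  linarith

lemma exp_merge (k : ℕ) (t : ℝ) :
    Real.exp t * (Real.exp t ^ k * (Real.exp t)⁻¹ * Real.exp (-t ^ 2 / 2))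
      = Real.exp ((k:ℝ) * t - t ^ 2 / 2) := by
  rw [← Real.exp_nat_mul, ← Real.exp_neg, ← Real.exp_add, ← Real.exp_add, ← Real.exp_add]
  congr 1; ring

theorem stmt_11 (f fe : ℝ → ℝ) (ε : ℝ) (hε : ε ∈ Set.Icc (-1 : ℝ) 1)
    (hf : ∀ x > 0, f x = (1 / Real.sqrt (2 * π)) * x⁻¹ * Real.exp (-(Real.log x) ^ 2 / 2))
    (hfe : ∀ x > 0, fe x = f x * (1 + ε * Real.sin (2 * π * Real.log x))) :
    (∀ x > 0, 0 ≤ fe x) ∧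
    (∫ x in Set.Ioi (0 : ℝ), fe x) = 1 ∧
    (∀ k : ℕ, (∫ x in Set.Ioi (0 : ℝ), x ^ k * fe x)
        = ∫ x in Set.Ioi (0 : ℝ), x ^ k * f x) ∧
    (∀ k : ℕ, (∫ x in Set.Ioi (0 : ℝ), x ^ k * f x) = Real.exp ((k : ℝ) ^ 2 / 2)) := by
  obtain ⟨hε1, hε2⟩ := hε
  set c : ℝ := 1 / Real.sqrt (2 * π) with hc
  -- moment of f after change of variables
  have hA : ∀ k : ℕ, (∫ x in Set.Ioi (0:ℝ), x ^ k * f x)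
      = c * ∫ t : ℝ, Real.exp ((k:ℝ) * t - t ^ 2 / 2) := by
    intro k
    have h1 : (∫ x in Set.Ioi (0:ℝ), x ^ k * f x)
        = ∫ x in Set.Ioi (0:ℝ), c * (x ^ k * x⁻¹ * Real.exp (-(Real.log x) ^ 2 / 2)) :=
      setIntegral_congr_fun measurableSet_Ioi (fun x hx => by rw [hf x hx]; ring)
    rw [h1, cov_exp, ← integral_const_mul]
    congr 1; funext t
    rw [Real.log_exp]
    linear_combination c * exp_merge k t
  have hGauss : ∀ k : ℕ,
      c * (∫ t : ℝ, Real.exp ((k:ℝ) * t - t ^ 2 / 2)) = Real.exp ((k:ℝ) ^ 2 / 2) := by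
    intro k
    have hs : Real.sqrt (2 * π) ≠ 0 := ne_of_gt (Real.sqrt_pos.mpr (by positivity))
    rw [gauss_val, hc]
    field_simp
  -- moment of fe after change of variables
  have hB : ∀ k : ℕ, (∫ x in Set.Ioi (0:ℝ), x ^ k * fe x)
      = c * ∫ t : ℝ, Real.exp ((k:ℝ) * t - t ^ 2 / 2) * (1 + ε * Real.sin (2 * π * t)) := by
    intro k
    have h1 : (∫ x in Set.Ioi (0:ℝ), x ^ k * fe x)
        = ∫ x in Set.Ioi (0:ℝ), c * (x ^ k * x⁻¹ * Real.exp (-(Real.log x) ^ 2 / 2)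
            * (1 + ε * Real.sin (2 * π * Real.log x))) :=
      setIntegral_congr_fun measurableSet_Ioi (fun x hx => by rw [hfe x hx, hf x hx]; ring)
    rw [h1, cov_exp, ← integral_const_mul]
    congr 1; funext t
    rw [Real.log_exp]
    linear_combination (c * (1 + ε * Real.sin (2 * π * t))) * exp_merge k t
  have hSplit : ∀ k : ℕ,
      (∫ t : ℝ, Real.exp ((k:ℝ) * t - t ^ 2 / 2) * (1 + ε * Real.sin (2 * π * t)))
        = ∫ t : ℝ, Real.exp ((k:ℝ) * t - t ^ 2 / 2) := by
    intro k
    have hpt : ∀ t : ℝ, Real.exp ((k:ℝ) * t - t ^ 2 / 2) * (1 + ε * Real.sin (2 * π * t))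
        = Real.exp ((k:ℝ) * t - t ^ 2 / 2)
          + ε * (Real.exp ((k:ℝ) * t - t ^ 2 / 2) * Real.sin (2 * π * t)) := fun t => by ring
    simp_rw [hpt]
    rw [integral_add (integrable_gauss _) ((integrable_gauss_sin k).const_mul ε),
      integral_const_mul, sin_int_zero, mul_zero, add_zero]
  have h3 : ∀ k : ℕ, (∫ x in Set.Ioi (0:ℝ), x ^ k * fe x)
      = ∫ x in Set.Ioi (0:ℝ), x ^ k * f x := by
    intro k; rw [hB k, hSplit k, hA k]
  have h4 : ∀ k : ℕ, (∫ x in Set.Ioi (0:ℝ), x ^ k * f x) = Real.exp ((k:ℝ) ^ 2 / 2) := by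
    intro k; rw [hA k, hGauss k]
  refine ⟨?_, ?_, h3, h4⟩
  · intro x hx
    rw [hfe x hx, hf x hx]
    have hs1 := Real.neg_one_le_sin (2 * π * Real.log x)
    have hs2 := Real.sin_le_one (2 * π * Real.log x)
    have hpos : (0:ℝ) ≤ 1 + ε * Real.sin (2 * π * Real.log x) := by nlinarith
    exact mul_nonneg
      (mul_nonneg (mul_nonneg (by positivity) (inv_nonneg.mpr hx.le)) (Real.exp_nonneg _)) hpos
  · have e3 := h3 0
    have e4 := h4 0
    simp only [pow_zero, one_mul, Nat.cast_zero] at e3 e4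
    rw [e3, e4]
    norm_num
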